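/- Crossbar theorem: in a real vector space, suppose a, b, c are not collinear, e satisfies Sbtw ℝ a e c, u satisfies Sbtw ℝ b a u, and v satisfies Sbtw ℝ b c v. Then there exists a point w with Sbtw ℝ u w v and Sbtw ℝ b e w; that is, the ray from b through e meets the crossbar uv. -/

import Mathlib

open AffineMap Set

private lemma crossbar_indep {V : Type*} [AddCommGroup V] [Module ℝ V]
    {a b c : V} (hnc : ¬ Collinear ℝ ({a, b, c} : Set V)) {p q : ℝ}
    (h : p • (a - b) + q • (c - b) = 0) : p = 0 ∧ q = 0 := by
  by_contra hpq
  apply hnc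
  rw [collinear_iff_of_mem (show b ∈ ({a, b, c} : Set V) by simp)]
  rcases eq_or_ne q 0 with hq | hq
  · have hp : p ≠ 0 := by tauto
    have hA : a - b = 0 := by
      rw [hq, zero_smul, add_zero, smul_eq_zero] at h
      tauto
    refine ⟨c - b, ?_⟩
    intro x hx
    simp only [Set.mem_insert_iff, Set.mem_singleton_iff] at hx
    rcases hx with hx | hx | hx
    · refine ⟨0, ?_⟩
      rw [sub_eq_zero] at hA
      simp [hx, hA]
    · exact ⟨0, by simp [hx]⟩
    · exact ⟨1, by simp [hx]⟩
  · refine ⟨a - b, ?_⟩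
    intro x hx
    simp only [Set.mem_insert_iff, Set.mem_singleton_iff] at hx
    rcases hx with hx | hx | hx
    · exact ⟨1, by simp [hx]⟩
    · exact ⟨0, by simp [hx]⟩
    · refine ⟨-p / q, ?_⟩
      have hcb : c - b = (-p / q) • (a - b) := by
        have h' : q • (c - b) = (-p) • (a - b) := by
          rw [neg_smul]; linear_combination (norm := module) h
        rw [div_eq_mul_inv, mul_comm, mul_smul, ← h', inv_smul_smul₀ hq]
      rw [hx, vadd_eq_add, ← hcb]
      abel

/-- Crossbar theorem: the ray from `b` through `e` meets the crossbar `uv`. -/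
theorem crossbar {V : Type*} [AddCommGroup V] [Module ℝ V]
    {a b c e u v : V} (hnc : ¬ Collinear ℝ ({a, b, c} : Set V))
    (he : Sbtw ℝ a e c) (hu : Sbtw ℝ b a u) (hv : Sbtw ℝ b c v) :
    ∃ w : V, Sbtw ℝ u w v ∧ Sbtw ℝ b e w := by
  obtain ⟨t, ht, hte⟩ := he.mem_image_Ioo
  obtain ⟨s, hs, hsa⟩ := hu.mem_image_Ioo
  obtain ⟨r, hr, hrc⟩ := hv.mem_image_Ioo
  rw [lineMap_apply_module] at hte hsa hrc
  obtain ⟨ht0, ht1⟩ := ht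
  obtain ⟨hs0, hs1⟩ := hs
  obtain ⟨hr0, hr1⟩ := hr
  set α : ℝ := s⁻¹ with hα
  set β : ℝ := r⁻¹ with hβ
  have hα1 : 1 < α := (one_lt_inv₀ hs0).2 hs1
  have hβ1 : 1 < β := (one_lt_inv₀ hr0).2 hr1
  have hα0 : 0 < α := lt_trans one_pos hα1
  have hβ0 : 0 < β := lt_trans one_pos hβ1
  have hub : u - b = α • (a - b) := by
    have hh : s • (u - b) = a - b := by linear_combination (norm := module) hsa
    rw [← hh, smul_smul, hα, inv_mul_cancel₀ (ne_of_gt hs0), one_smul]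
  have hvb : v - b = β • (c - b) := by
    have hh : r • (v - b) = c - b := by linear_combination (norm := module) hrc
    rw [← hh, smul_smul, hβ, inv_mul_cancel₀ (ne_of_gt hr0), one_smul]
  have heb : e - b = (1 - t) • (a - b) + t • (c - b) := by
    linear_combination (norm := module) -hte
  set d : ℝ := α * t + β * (1 - t) with hd
  have hd0 : 0 < d := by
    have h1 : 0 < α * t := mul_pos hα0 ht0
    have h2 : 0 < β * (1 - t) := mul_pos hβ0 (by linarith)
    linarith
  set l : ℝ := α * t / d with hl
  have hl0 : 0 < l := div_pos (mul_pos hα0 ht0) hd0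
  have hl1 : l < 1 := by
    rw [hl, div_lt_one hd0, hd]
    have : 0 < β * (1 - t) := mul_pos hβ0 (by linarith)
    linarith
  set k : ℝ := α * β / d with hk
  have hk1 : 1 < k := by
    rw [hk, lt_div_iff₀ hd0, one_mul, hd]
    nlinarith
  have hk0 : 0 < k := lt_trans one_pos hk1
  set w : V := lineMap u v l with hw
  -- key identity: w - b = k • (e - b)
  have hwb : w - b = k • (e - b) := by
    rw [hw, lineMap_apply_module]
    have h1 : (1 - l) • u + l • v - b = (1 - l) • (u - b) + l • (v - b) := by module
    rw [h1, hub, hvb, heb, smul_smul, smul_smul, smul_add, smul_smul, smul_smul]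
    have e1 : (1 - l) * α = k * (1 - t) := by
      rw [hl, hk]
      field_simp
      rw [hd]
      ring
    have e2 : l * β = k * t := by
      rw [hl, hk]
      field_simp
    rw [e1, e2]
  have huv : u ≠ v := by
    intro h
    have hz : α • (a - b) + (-β) • (c - b) = 0 := by
      rw [neg_smul, ← hub, ← hvb, h]
      abel
    exact absurd (crossbar_indep hnc hz).1 (ne_of_gt hα0)
  have hbw : b ≠ w := by
    intro h
    have hz : (k * (1 - t)) • (a - b) + (k * t) • (c - b) = 0 := by
      rw [← smul_smul, ← smul_smul, ← smul_add, ← heb, ← hwb, ← h]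
      simp
    have := (crossbar_indep hnc hz).2
    exact absurd this (ne_of_gt (mul_pos hk0 ht0))
  refine ⟨w, ?_, ?_⟩
  · rw [hw]
    exact sbtw_lineMap_iff.2 ⟨huv, hl0, hl1⟩
  · have hew : e = lineMap b w k⁻¹ := by
      rw [lineMap_apply_module]
      have : k⁻¹ • (w - b) = e - b := by
        rw [hwb, smul_smul, inv_mul_cancel₀ (ne_of_gt hk0), one_smul]
      linear_combination (norm := module) -this
    rw [hew]
    exact sbtw_lineMap_iff.2 ⟨hbw, inv_pos.2 hk0, inv_lt_one_of_one_lt₀ hk1⟩
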